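/- (Sign of the topography correction term in the fully wet case.) Suppose min(w_i, w_{i+1}) > max(z_i, z_{i+1}), and define z_half = min(max(z_i, z_{i+1}), min(w_i, w_{i+1})), y⁻ = min(w_i − z_half, y_i), y⁺ = min(w_{i+1} − z_half, y_{i+1}), w⁻ = y⁻ + z_half, w⁺ = y⁺ + z_half, where w_i = y_i + z_i, w_{i+1} = y_{i+1} + z_{i+1}, and y_i, y_{i+1} ≥ 0. Then (y⁺ − y⁻)·((w⁺ + w⁻)/2 − w_i) ≥ 0. -/
import Mathlib

/-- Sign of the topography correction term in the fully wet case. -/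
theorem topography_correction_fully_wet (zi zi1 yi yi1 : ℝ)
    (hyi : 0 ≤ yi) (hyi1 : 0 ≤ yi1)
    (hwet : max zi zi1 < min (yi + zi) (yi1 + zi1)) :
    let wi := yi + zi
    let wi1 := yi1 + zi1
    let zh := min (max zi zi1) (min wi wi1)
    let ym := min (wi - zh) yi
    let yp := min (wi1 - zh) yi1
    let wm := ym + zh
    let wp := yp + zh
    0 ≤ (yp - ym) * ((wp + wm) / 2 - wi) := by
  intro wi wi1 zh ym yp wm wp
  have hzh : zh = max zi zi1 := min_eq_left hwet.le
  have h1 : zi ≤ max zi zi1 := le_max_left _ _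
  have h2 : zi1 ≤ max zi zi1 := le_max_right _ _
  have hym : ym = wi - zh := by
    apply min_eq_left; simp [wi, hzh]
  have hyp : yp = wi1 - zh := by
    apply min_eq_left; simp [wi1, hzh]
  have : (yp - ym) * ((wp + wm) / 2 - wi) = (wi1 - wi)^2 / 2 := by
    simp only [wp, wm, hym, hyp]; ring
  rw [this]; positivity
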